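/- Let Ω ⊆ ℝ^N be open and connected, and let P be a relatively closed subset of Ω whose (N-1)-dimensional Hausdorff measure is zero. Then Ω \ P is connected. -/

import Mathlib

open MeasureTheory

open Metric Set ENNReal NNReal Filter

lemma helper_vol_null {N : ℕ} (hN : 1 ≤ N) (S : Set (EuclideanSpace ℝ (Fin N)))
    (h : μH[(N:ℝ)] S = 0) : volume S = 0 := by
  have hlip : LipschitzWith 1 (WithLp.equiv 2 (Fin N → ℝ)) := PiLp.lipschitzWith_ofLp 2 _
  have h2 : μH[(N:ℝ)] ((WithLp.equiv 2 (Fin N → ℝ)) '' S) = 0 := by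
    have := hlip.hausdorffMeasure_image_le (by positivity : (0:ℝ) ≤ N) S
    simpa [h] using this
  have hpi : (volume : Measure (Fin N → ℝ)) ((WithLp.equiv 2 (Fin N → ℝ)) '' S) = 0 := by
    rw [← hausdorffMeasure_pi_real]
    simpa using h2
  obtain ⟨G, hG1, hG2, hG3⟩ := exists_measurable_superset_of_null hpi
  have : S ⊆ ((MeasurableEquiv.toLp 2 (Fin N → ℝ)).symm) ⁻¹' G := fun x hx =>
    hG1 (mem_image_of_mem _ hx)
  refine measure_mono_null this ?_
  rw [(EuclideanSpace.volume_preserving_symm_measurableEquiv_toLp (Fin N)).measure_preimage hG2.nullMeasurableSet]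
  exact hG3

lemma cover_of_null {X : Type*} [MetricSpace X] [MeasurableSpace X] [BorelSpace X] (k : ℕ) (hk : 1 ≤ k) (A : Set X)
    (hA : μH[(k:ℝ)] A = 0) (a₀ : X) (ha₀ : a₀ ∈ A) (ε : ℝ) (hε : 0 < ε) :
    ∃ (c : ℕ → X) (ρ : ℕ → ℝ), (∀ n, c n ∈ A) ∧ (∀ n, 0 < ρ n) ∧ (∀ n, ρ n ≤ 1) ∧
      (A ⊆ ⋃ n, Metric.closedBall (c n) (ρ n)) ∧
      ∑' n, (ENNReal.ofReal (ρ n))^k ≤ ENNReal.ofReal ε := by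
  set η : ℝ := min 1 (ε/4) with hηdef
  have hη0 : 0 < η := lt_min one_pos (by positivity)
  have hη1 : η ≤ 1 := min_le_left _ _
  -- extract a cover from the Hausdorff measure hypothesis
  rw [Measure.hausdorffMeasure_apply] at hA
  have h1 : (⨅ (t : ℕ → Set X) (_ : A ⊆ ⋃ n, t n) (_ : ∀ n, EMetric.diam (t n) ≤ 1),
      ∑' n, ⨆ (_ : (t n).Nonempty), EMetric.diam (t n) ^ (k:ℝ)) = 0 := by
    refine le_antisymm ?_ (zero_le)
    rw [← hA]
    exact le_iSup₂ (f := fun (r : ℝ≥0∞) (_ : 0 < r) =>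
      ⨅ (t : ℕ → Set X) (_ : A ⊆ ⋃ n, t n) (_ : ∀ n, EMetric.diam (t n) ≤ r),
        ∑' n, ⨆ (_ : (t n).Nonempty), EMetric.diam (t n) ^ (k:ℝ)) 1 zero_lt_one
  have h2 : (⨅ (t : ℕ → Set X) (_ : A ⊆ ⋃ n, t n) (_ : ∀ n, EMetric.diam (t n) ≤ 1),
      ∑' n, ⨆ (_ : (t n).Nonempty), EMetric.diam (t n) ^ (k:ℝ)) < ENNReal.ofReal (ε/2) := by
    rw [h1]; exact ENNReal.ofReal_pos.2 (by positivity)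
  rw [iInf_lt_iff] at h2
  obtain ⟨t, h2⟩ := h2
  rw [iInf_lt_iff] at h2
  obtain ⟨hcov, h2⟩ := h2
  rw [iInf_lt_iff] at h2
  obtain ⟨hdiam, hsum⟩ := h2
  classical
  refine ⟨fun n => if h : (t n ∩ A).Nonempty then h.choose else a₀,
    fun n => max (if (t n ∩ A).Nonempty then (EMetric.diam (t n)).toReal else 0) (η * 2⁻¹ ^ n),
    ?_, ?_, ?_, ?_, ?_⟩
  · intro n
    by_cases h : (t n ∩ A).Nonempty
    · simp only [dif_pos h]; exact h.choose_spec.2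
    · simp only [dif_neg h]; exact ha₀
  · intro n
    exact lt_max_of_lt_right (by positivity)
  · intro n
    refine max_le ?_ ?_
    · split
      · exact le_trans (ENNReal.toReal_mono ENNReal.one_ne_top (hdiam n)) (by simp)
      · exact zero_le_one
    · calc η * 2⁻¹ ^ n ≤ 1 * 1 := by
            apply mul_le_mul hη1 ?_ (by positivity) zero_le_one
            exact pow_le_one₀ (by norm_num) (by norm_num)
        _ = 1 := by norm_num
  · intro a ha
    obtain ⟨n, hn⟩ := mem_iUnion.1 (hcov ha)
    refine mem_iUnion.2 ⟨n, ?_⟩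
    have hne : (t n ∩ A).Nonempty := ⟨a, hn, ha⟩
    simp only [dif_pos hne, if_pos hne, mem_closedBall]
    refine le_max_of_le_left ?_
    have hedist : edist a hne.choose ≤ EMetric.diam (t n) :=
      EMetric.edist_le_diam_of_mem hn hne.choose_spec.1
    have hfin : EMetric.diam (t n) ≠ ⊤ := ne_top_of_le_ne_top ENNReal.one_ne_top (hdiam n)
    rw [dist_edist]
    exact ENNReal.toReal_mono hfin hedist
  · have key : ∀ n, (ENNReal.ofReal (max (if (t n ∩ A).Nonempty then (EMetric.diam (t n)).toReal else 0) (η * 2⁻¹ ^ n)))^k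
        ≤ (⨆ (_ : (t n).Nonempty), EMetric.diam (t n) ^ (k:ℝ)) + (ENNReal.ofReal (η * 2⁻¹ ^ n))^k := by
      intro n
      have hmax : ENNReal.ofReal (max (if (t n ∩ A).Nonempty then (EMetric.diam (t n)).toReal else 0) (η * 2⁻¹ ^ n))
          = max (ENNReal.ofReal (if (t n ∩ A).Nonempty then (EMetric.diam (t n)).toReal else 0)) (ENNReal.ofReal (η * 2⁻¹ ^ n)) := by
        exact (Monotone.map_max fun _ _ h => ENNReal.ofReal_le_ofReal h)
      rw [hmax]
      have h1' : (ENNReal.ofReal (if (t n ∩ A).Nonempty then (EMetric.diam (t n)).toReal else 0))^k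
          ≤ ⨆ (_ : (t n).Nonempty), EMetric.diam (t n) ^ (k:ℝ) := by
        by_cases h : (t n ∩ A).Nonempty
        · rw [if_pos h]
          have hfin : EMetric.diam (t n) ≠ ⊤ := ne_top_of_le_ne_top ENNReal.one_ne_top (hdiam n)
          rw [ENNReal.ofReal_toReal hfin]
          have hne : (t n).Nonempty := h.mono inter_subset_left
          refine le_trans ?_ (le_iSup (fun _ : (t n).Nonempty => EMetric.diam (t n) ^ (k:ℝ)) hne)
          rw [← ENNReal.rpow_natCast]
        · rw [if_neg h]
          simp [zero_pow (by omega : k ≠ 0)]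
      calc (max (ENNReal.ofReal (if (t n ∩ A).Nonempty then (EMetric.diam (t n)).toReal else 0)) (ENNReal.ofReal (η * 2⁻¹ ^ n)))^k
          = max ((ENNReal.ofReal (if (t n ∩ A).Nonempty then (EMetric.diam (t n)).toReal else 0))^k) ((ENNReal.ofReal (η * 2⁻¹ ^ n))^k) := by
            exact Monotone.map_max fun _ _ h => pow_le_pow_left' h k
        _ ≤ _ := max_le (le_add_right h1') (le_add_left le_rfl)
    calc ∑' n, (ENNReal.ofReal (max (if (t n ∩ A).Nonempty then (EMetric.diam (t n)).toReal else 0) (η * 2⁻¹ ^ n)))^k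
        ≤ ∑' n, ((⨆ (_ : (t n).Nonempty), EMetric.diam (t n) ^ (k:ℝ)) + (ENNReal.ofReal (η * 2⁻¹ ^ n))^k) :=
          ENNReal.tsum_le_tsum key
      _ = (∑' n, ⨆ (_ : (t n).Nonempty), EMetric.diam (t n) ^ (k:ℝ)) + ∑' n, (ENNReal.ofReal (η * 2⁻¹ ^ n))^k :=
          ENNReal.tsum_add
      _ ≤ ENNReal.ofReal (ε/2) + ENNReal.ofReal (ε/2) := by
          refine add_le_add hsum.le ?_
          have hterm : ∀ n : ℕ, (ENNReal.ofReal (η * 2⁻¹ ^ n))^k ≤ ENNReal.ofReal (ε/4) * 2⁻¹ ^ n := by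
            intro n
            have : ENNReal.ofReal (η * 2⁻¹ ^ n) = ENNReal.ofReal η * (ENNReal.ofReal 2⁻¹) ^ n := by
              rw [ENNReal.ofReal_mul hη0.le, ENNReal.ofReal_pow (by norm_num)]
            rw [this, mul_pow]
            have hη' : ENNReal.ofReal η ≤ 1 := by
              rw [← ENNReal.ofReal_one]; exact ENNReal.ofReal_le_ofReal hη1
            have h1'' : (ENNReal.ofReal η)^k ≤ ENNReal.ofReal (ε/4) := by
              calc (ENNReal.ofReal η)^k ≤ (ENNReal.ofReal η)^1 := pow_le_pow_of_le_one (zero_le) hη' hk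
                _ = ENNReal.ofReal η := pow_one _
                _ ≤ ENNReal.ofReal (ε/4) := ENNReal.ofReal_le_ofReal (min_le_right _ _)
            have h2'' : ((ENNReal.ofReal 2⁻¹))^(n*k) ≤ (2⁻¹ : ℝ≥0∞)^n := by
              rw [show ENNReal.ofReal (2⁻¹:ℝ) = (2⁻¹ : ℝ≥0∞) by
                rw [ENNReal.ofReal_inv_of_pos (by norm_num)]; norm_num]
              exact pow_le_pow_of_le_one (zero_le) (by norm_num) (Nat.le_mul_of_pos_right n (by omega))
            calc (ENNReal.ofReal η)^k * ((ENNReal.ofReal 2⁻¹)^n)^k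
                = (ENNReal.ofReal η)^k * (ENNReal.ofReal 2⁻¹)^(n*k) := by rw [← pow_mul]
              _ ≤ ENNReal.ofReal (ε/4) * 2⁻¹^n := mul_le_mul' h1'' h2''
          calc ∑' n, (ENNReal.ofReal (η * 2⁻¹ ^ n))^k
              ≤ ∑' n : ℕ, ENNReal.ofReal (ε/4) * 2⁻¹ ^ n := ENNReal.tsum_le_tsum hterm
            _ = ENNReal.ofReal (ε/4) * ∑' n : ℕ, (2⁻¹:ℝ≥0∞) ^ n := ENNReal.tsum_mul_left
            _ = ENNReal.ofReal (ε/4) * 2 := by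
                rw [ENNReal.tsum_geometric]
                norm_num [ENNReal.one_sub_inv_two]
            _ ≤ ENNReal.ofReal (ε/2) := by
                rw [← ENNReal.ofReal_ofNat, ← ENNReal.ofReal_mul (by positivity)]
                exact ENNReal.ofReal_le_ofReal (le_of_eq (by ring))
      _ = ENNReal.ofReal ε := by
          rw [← ENNReal.ofReal_add (by positivity) (by positivity)]
          norm_num

lemma helper_cone_null {N : ℕ} (hN : 2 ≤ N) (x : EuclideanSpace ℝ (Fin N))
    (A : Set (EuclideanSpace ℝ (Fin N))) (R M : ℝ)
    (hM : 1 ≤ M) (hR : 0 < R) (hAR : ∀ p ∈ A, dist p x ≤ R)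
    (hA : μH[((N - 1 : ℕ) : ℝ)] A = 0) :
    volume {z : EuclideanSpace ℝ (Fin N) | ∃ p ∈ A, ∃ t ∈ Icc (1:ℝ) M, z = x + t • (p - x)} = 0 := by
  rcases A.eq_empty_or_nonempty with rfl | ⟨a₀, ha₀⟩
  · convert measure_empty
    · ext z; simp
    · infer_instance
  set V := volume (ball (0 : EuclideanSpace ℝ (Fin N)) 1) with hV
  set C1 : ℝ := (M+1)^N * ((M-1)*R + 2) with hC1
  have hC1pos : 0 < C1 := by
    have h1 : (0:ℝ) < (M+1)^N := by positivity
    have h2 : (0:ℝ) < (M-1)*R + 2 := by nlinarith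
    positivity
  set Cst : ℝ≥0∞ := ENNReal.ofReal C1 * V with hCst
  -- main estimate
  have main : ∀ ε : ℝ, 0 < ε →
      volume {z : EuclideanSpace ℝ (Fin N) | ∃ p ∈ A, ∃ t ∈ Icc (1:ℝ) M, z = x + t • (p - x)}
        ≤ Cst * ENNReal.ofReal ε := by
    intro ε hε
    obtain ⟨c, ρ, hcA, hρ0, hρ1, hcover, hsum⟩ :=
      cover_of_null (N-1) (by omega) A hA a₀ ha₀ ε hε
    set K : ℕ → ℕ := fun n => ⌈(M-1)*R/ρ n⌉₊ + 1 with hK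
    set z : ℕ → ℕ → EuclideanSpace ℝ (Fin N) :=
      fun n j => x + (1 + (j:ℝ) * (ρ n / R)) • (c n - x) with hz
    have hsubset : {w : EuclideanSpace ℝ (Fin N) | ∃ p ∈ A, ∃ t ∈ Icc (1:ℝ) M, w = x + t • (p - x)}
        ⊆ ⋃ n, ⋃ j ∈ Finset.range (K n), closedBall (z n j) ((M+1) * ρ n) := by
      rintro w ⟨p, hp, t, ⟨ht1, htM⟩, rfl⟩
      obtain ⟨n, hn⟩ := mem_iUnion.1 (hcover hp)
      rw [mem_closedBall] at hn
      refine mem_iUnion.2 ⟨n, ?_⟩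
      set j : ℕ := ⌊(t-1)*R/ρ n⌋₊ with hj
      have hρn := hρ0 n
      have hargnn : 0 ≤ (t-1)*R/ρ n := div_nonneg (mul_nonneg (by linarith) hR.le) hρn.le
      have hjK : j ∈ Finset.range (K n) := by
        have h1 : j ≤ ⌈(t-1)*R/ρ n⌉₊ := Nat.floor_le_ceil _
        have h2 : ⌈(t-1)*R/ρ n⌉₊ ≤ ⌈(M-1)*R/ρ n⌉₊ :=
          Nat.ceil_le_ceil ((div_le_div_iff_of_pos_right hρn).mpr (by nlinarith))
        simp only [Finset.mem_range, K]
        omega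
      refine mem_iUnion₂.2 ⟨j, hjK, ?_⟩
      rw [mem_closedBall]
      set s : ℝ := 1 + (j:ℝ) * (ρ n / R) with hs
      have hjle : (j:ℝ) ≤ (t-1)*R/ρ n := Nat.floor_le hargnn
      have hslet : s ≤ t := by
        rw [hs]
        have : (j:ℝ) * (ρ n / R) ≤ ((t-1)*R/ρ n) * (ρ n / R) :=
          mul_le_mul_of_nonneg_right hjle (by positivity)
        have heq : ((t-1)*R/ρ n) * (ρ n / R) = t - 1 := by
          field_simp
        linarith [heq ▸ this]
      have hts : t - s ≤ ρ n / R := by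
        have h3 : (t-1)*R/ρ n < (j:ℝ) + 1 := Nat.lt_floor_add_one _
        have h4 : t - 1 < ((j:ℝ) + 1) * (ρ n / R) := by
          have := mul_lt_mul_of_pos_right h3 (show (0:ℝ) < ρ n / R by positivity)
          have heq : ((t-1)*R/ρ n) * (ρ n / R) = t - 1 := by field_simp
          linarith [heq ▸ this]
        rw [hs]
        have : (j:ℝ) * (ρ n / R) + (ρ n / R) = ((j:ℝ)+1) * (ρ n / R) := by ring
        linarith
      have hdiff : (x + t • (p - x)) - z n j = t • (p - c n) + (t - s) • (c n - x) := by
        rw [hz, hs]; module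
      have hnorm : dist (x + t • (p - x)) (z n j) ≤ (M+1) * ρ n := by
        rw [dist_eq_norm, hdiff]
        calc ‖t • (p - c n) + (t - s) • (c n - x)‖
            ≤ ‖t • (p - c n)‖ + ‖(t - s) • (c n - x)‖ := norm_add_le _ _
          _ = |t| * ‖p - c n‖ + |t - s| * ‖c n - x‖ := by rw [norm_smul, norm_smul, Real.norm_eq_abs, Real.norm_eq_abs]
          _ ≤ M * ρ n + (ρ n / R) * R := by
              have ht0 : 0 ≤ t := by linarith
              have hsle : 0 ≤ t - s := by linarith
              rw [abs_of_nonneg ht0, abs_of_nonneg hsle]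
              refine add_le_add (mul_le_mul htM ?_ (norm_nonneg _) (by linarith)) ?_
              · rw [← dist_eq_norm]; exact hn
              · refine mul_le_mul hts ?_ (norm_nonneg _) (by positivity)
                rw [← dist_eq_norm]; exact hAR _ (hcA n)
          _ = (M+1) * ρ n := by field_simp
      exact hnorm
    -- real-number key inequality
    have keyreal : ∀ n, (K n : ℝ) * ((M+1)*ρ n)^N ≤ C1 * ρ n^(N-1) := by
      intro n
      have hρn := hρ0 n
      have hρn1 := hρ1 n
      have hKle : (K n:ℝ) ≤ (M-1)*R/ρ n + 2 := by
        have h0 : (0:ℝ) ≤ (M-1)*R/ρ n := div_nonneg (mul_nonneg (by linarith) hR.le) hρn.le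
        have h1 := Nat.ceil_lt_add_one h0
        simp only [K]
        push_cast
        linarith
      have hpm : ρ n ^ N = ρ n ^ (N-1) * ρ n := by rw [← pow_succ]; congr 1; omega
      have hpow0 : (0:ℝ) ≤ ρ n ^ (N-1) := by positivity
      rw [mul_pow, hpm, hC1]
      calc (K n:ℝ) * ((M+1)^N * (ρ n^(N-1) * ρ n))
          ≤ ((M-1)*R/ρ n + 2) * ((M+1)^N * (ρ n^(N-1) * ρ n)) := by
            apply mul_le_mul_of_nonneg_right hKle (by positivity)
        _ = (M+1)^N * (((M-1)*R) * ρ n^(N-1) + 2 * (ρ n^(N-1) * ρ n)) := by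
            field_simp
        _ ≤ (M+1)^N * (((M-1)*R) * ρ n^(N-1) + 2 * ρ n^(N-1)) := by
            apply mul_le_mul_of_nonneg_left ?_ (by positivity)
            have h2 : ρ n^(N-1) * ρ n ≤ ρ n^(N-1) * 1 := mul_le_mul_of_nonneg_left hρn1 hpow0
            linarith
        _ = (M+1)^N * ((M-1)*R + 2) * ρ n^(N-1) := by ring
    have keyE : ∀ n, (K n : ℝ≥0∞) * ENNReal.ofReal (((M+1)*ρ n)^N)
        ≤ ENNReal.ofReal C1 * (ENNReal.ofReal (ρ n))^(N-1) := by
      intro n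
      rw [← ENNReal.ofReal_natCast (K n), ← ENNReal.ofReal_mul (by positivity),
        ← ENNReal.ofReal_pow (hρ0 n).le, ← ENNReal.ofReal_mul hC1pos.le]
      exact ENNReal.ofReal_le_ofReal (keyreal n)
    calc volume {z : EuclideanSpace ℝ (Fin N) | ∃ p ∈ A, ∃ t ∈ Icc (1:ℝ) M, z = x + t • (p - x)}
        ≤ volume (⋃ n, ⋃ j ∈ Finset.range (K n), closedBall (z n j) ((M+1) * ρ n)) :=
          measure_mono hsubset
      _ ≤ ∑' n, volume (⋃ j ∈ Finset.range (K n), closedBall (z n j) ((M+1) * ρ n)) :=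
          measure_iUnion_le _
      _ ≤ ∑' n, (K n : ℝ≥0∞) * ENNReal.ofReal (((M+1)*ρ n)^N) * V := by
          refine ENNReal.tsum_le_tsum fun n => ?_
          calc volume (⋃ j ∈ Finset.range (K n), closedBall (z n j) ((M+1) * ρ n))
              ≤ ∑ j ∈ Finset.range (K n), volume (closedBall (z n j) ((M+1) * ρ n)) :=
                measure_biUnion_finset_le _ _
            _ = ∑ j ∈ Finset.range (K n), ENNReal.ofReal (((M+1)*ρ n)^N) * V := by
                refine Finset.sum_congr rfl fun j _ => ?_
                rw [Measure.addHaar_closedBall _ _ (mul_nonneg (by linarith : (0:ℝ) ≤ M+1) (hρ0 n).le),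
                  finrank_euclideanSpace_fin]
            _ = (K n : ℝ≥0∞) * ENNReal.ofReal (((M+1)*ρ n)^N) * V := by
                rw [Finset.sum_const, Finset.card_range, nsmul_eq_mul, mul_assoc]
      _ ≤ ∑' n, ENNReal.ofReal C1 * (ENNReal.ofReal (ρ n))^(N-1) * V := by
          refine ENNReal.tsum_le_tsum fun n => ?_
          exact mul_le_mul_left (keyE n) V
      _ = ENNReal.ofReal C1 * V * ∑' n, (ENNReal.ofReal (ρ n))^(N-1) := by
          rw [← ENNReal.tsum_mul_left]
          congr 1
          ext n
          ring
      _ ≤ Cst * ENNReal.ofReal ε := by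
          rw [hCst]
          exact mul_le_mul_right hsum _
  -- conclude
  have hCstne : Cst ≠ ⊤ := ENNReal.mul_ne_top ENNReal.ofReal_ne_top measure_ball_lt_top.ne
  have htends : Filter.Tendsto (fun n : ℕ => Cst * ENNReal.ofReal (1/(n+1))) Filter.atTop (nhds 0) := by
    have h1 : Filter.Tendsto (fun n : ℕ => ENNReal.ofReal (1/(n+1))) Filter.atTop (nhds 0) := by
      rw [← ENNReal.ofReal_zero]
      exact ENNReal.tendsto_ofReal tendsto_one_div_add_atTop_nhds_zero_nat
    have h2 := ENNReal.Tendsto.const_mul h1 (Or.inr hCstne)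
    simpa using h2
  refine le_antisymm ?_ (zero_le)
  exact ge_of_tendsto' htends fun n => main (1/(n+1)) (by positivity)

lemma helper_ball_joined (hN : 2 ≤ N) (C Ω P : Set (EuclideanSpace ℝ (Fin N)))
    (hC : IsClosed C) (hPC : P = C ∩ Ω)
    (hH : μH[((N - 1 : ℕ) : ℝ)] P = 0) (y : EuclideanSpace ℝ (Fin N)) (r : ℝ) (hr : 0 < r)
    (hsub : closedBall y r ⊆ Ω) :
    ∀ a ∈ ball y r \ P, ∀ b ∈ ball y r \ P, JoinedIn (ball y r \ P) a b := by
  intro a ⟨haB, haP⟩ b ⟨hbB, hbP⟩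
  set A := C ∩ closedBall y r with hAdef
  have hAP : A ⊆ P := fun p hp => hPC ▸ ⟨hp.1, hsub hp.2⟩
  have hA0 : μH[((N - 1 : ℕ) : ℝ)] A = 0 := measure_mono_null hAP hH
  have hPball : P ∩ ball y r ⊆ A := fun q hq =>
    ⟨(hPC ▸ hq.1).1, ball_subset_closedBall hq.2⟩
  have hjoin : ∀ w ∈ ball y r \ P, ∀ z ∈ ball y r, z ∉ P → segment ℝ w z ∩ P = ∅ →
      JoinedIn (ball y r \ P) w z := by
    rintro w ⟨hwB, _⟩ z hzB hzP hseg
    apply JoinedIn.of_segment_subset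
    intro q hq
    refine ⟨(convex_ball y r).segment_subset hwB hzB hq, fun hqP => ?_⟩
    exact absurd (mem_inter hq hqP) (by rw [hseg]; exact notMem_empty q)
  rcases A.eq_empty_or_nonempty with hAe | hAne
  · -- A empty : direct segment
    have h1 : segment ℝ a b ∩ P = ∅ := by
      rw [eq_empty_iff_forall_notMem]
      rintro q ⟨hq1, hq2⟩
      have : q ∈ A := hPball ⟨hq2, (convex_ball y r).segment_subset haB hbB hq1⟩
      rw [hAe] at this
      exact this
    exact hjoin a ⟨haB, haP⟩ b hbB hbP h1
  · have hclA : IsClosed A := hC.inter isClosed_closedBall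
    have haA : a ∉ A := fun h => haP (hAP h)
    have hbA : b ∉ A := fun h => hbP (hAP h)
    have hdista : ∀ w, w ∈ ball y r → ∀ p ∈ A, dist p w ≤ 2*r := by
      intro w hwB p hp
      have h1 : dist p y ≤ r := mem_closedBall.1 hp.2
      have h2 : dist y w ≤ r := (mem_ball'.1 hwB).le
      calc dist p w ≤ dist p y + dist y w := dist_triangle _ _ _
        _ ≤ 2*r := by linarith
    have hδ2r : ∀ w, w ∈ ball y r → infDist w A ≤ 2*r := by
      intro w hwB
      obtain ⟨p₀, hp₀⟩ := hAne
      exact le_trans (infDist_le_dist_of_mem hp₀)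
        (by rw [dist_comm]; exact hdista w hwB p₀ hp₀)
    have hAvol : volume A = 0 := by
      apply helper_vol_null (by omega) A
      have h2 := Measure.hausdorffMeasure_mono
        (show ((N - 1 : ℕ) : ℝ) ≤ (N:ℝ) by
          push_cast [Nat.cast_sub (by omega : 1 ≤ N)]; linarith) A
      exact le_antisymm (hA0 ▸ h2) (zero_le)
    -- bad cones
    set bad : EuclideanSpace ℝ (Fin N) → Set (EuclideanSpace ℝ (Fin N)) := fun w =>
      {z : EuclideanSpace ℝ (Fin N) | ∃ p ∈ A, ∃ t ∈ Icc (1:ℝ) (2*r/infDist w A),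
        z = w + t • (p - w)} with hbad
    have hbadvol : ∀ w, w ∈ ball y r → w ∉ A → volume (bad w) = 0 := by
      intro w hwB hwA
      have hwδ : 0 < infDist w A := (hclA.notMem_iff_infDist_pos hAne).1 hwA
      exact helper_cone_null hN w A (2*r) (2*r/infDist w A)
        ((one_le_div hwδ).2 (hδ2r w hwB)) (by linarith) (hdista w hwB) hA0
    -- find a good z
    obtain ⟨z, hzball, hzbad⟩ : ∃ z ∈ ball y r, z ∉ bad a ∪ bad b ∪ A := by
      by_contra h
      push_neg at h
      have hsub2 : ball y r ⊆ bad a ∪ bad b ∪ A := fun z hz => h z hz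
      have hvol : volume (ball y r) = 0 :=
        measure_mono_null hsub2
          (measure_union_null (measure_union_null (hbadvol a haB haA) (hbadvol b hbB hbA)) hAvol)
      exact absurd hvol (measure_ball_pos volume y hr).ne'
    simp only [mem_union, not_or] at hzbad
    obtain ⟨⟨hzbada, hzbadb⟩, hzA⟩ := hzbad
    have hzP : z ∉ P := fun h => hzA (hPball ⟨h, hzball⟩)
    -- segments from w to z avoid P whenever z ∉ bad w
    have hseg : ∀ w, w ∈ ball y r → w ∉ A → z ∉ bad w → segment ℝ w z ∩ P = ∅ := by
      intro w hwB hwA hwbad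
      have hwδ : 0 < infDist w A := (hclA.notMem_iff_infDist_pos hAne).1 hwA
      rw [eq_empty_iff_forall_notMem]
      rintro q ⟨hq1, hq2⟩
      have hqA : q ∈ A := hPball ⟨hq2, (convex_ball y r).segment_subset hwB hzball hq1⟩
      rw [segment_eq_image'] at hq1
      obtain ⟨s, hs, hq⟩ := hq1
      simp only at hq
      have hs0 : s ≠ 0 := by
        rintro rfl
        rw [zero_smul, add_zero] at hq
        exact hwA (hq ▸ hqA)
      have hspos : 0 < s := lt_of_le_of_ne hs.1 (Ne.symm hs0)
      have hqw : q - w = s • (z - w) := by rw [← hq]; module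
      have hzeq : z = w + s⁻¹ • (q - w) := by
        rw [hqw, smul_smul, inv_mul_cancel₀ hs0, one_smul]
        module
      apply hwbad
      refine ⟨q, hqA, s⁻¹, ⟨?_, ?_⟩, hzeq⟩
      · rw [← one_div]
        refine (le_div_iff₀ hspos).2 ?_
        linarith [hs.2]
      · have hd1 : infDist w A ≤ dist w q := infDist_le_dist_of_mem hqA
        have hd2 : dist w q = s * dist z w := by
          rw [dist_eq_norm, dist_eq_norm]
          have hwq : w - q = (-s) • (z - w) := by rw [← hq]; module
          rw [hwq, norm_smul, Real.norm_eq_abs, abs_neg, abs_of_pos hspos]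
        have hzw : dist z w ≤ 2*r := by
          have h1 : dist z y < r := mem_ball.1 hzball
          have h2 : dist y w < r := mem_ball'.1 hwB
          calc dist z w ≤ dist z y + dist y w := dist_triangle _ _ _
            _ ≤ 2*r := by linarith
        rw [← one_div]
        rw [div_le_div_iff₀ hspos hwδ]
        have h3 : infDist w A ≤ s * (2*r) := by
          calc infDist w A ≤ s * dist z w := hd2 ▸ hd1
            _ ≤ s * (2*r) := mul_le_mul_of_nonneg_left hzw hspos.le
        linarith
    have hja : JoinedIn (ball y r \ P) a z :=
      hjoin a ⟨haB, haP⟩ z hzball hzP (hseg a haB haA hzbada)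
    have hjb : JoinedIn (ball y r \ P) b z :=
      hjoin b ⟨hbB, hbP⟩ z hzball hzP (hseg b hbB hbA hzbadb)
    exact hja.trans hjb.symm

/-- If `Ω ⊆ ℝ^N` is open and connected and `P ⊆ Ω` is relatively closed in `Ω`
with `(N-1)`-dimensional Hausdorff measure zero, then `Ω \ P` is connected. -/
theorem stmt0 {N : ℕ} (hN : 1 ≤ N) (Ω P : Set (EuclideanSpace ℝ (Fin N)))
    (hΩopen : IsOpen Ω) (hΩconn : IsConnected Ω)
    (hPsub : P ⊆ Ω) (hPclosed : ∃ C : Set (EuclideanSpace ℝ (Fin N)), IsClosed C ∧ P = C ∩ Ω)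
    (hPnull : μH[(N : ℝ) - 1] P = 0) :
    IsConnected (Ω \ P) := by
  obtain ⟨C, hCclosed, hPC⟩ := hPclosed
  rcases eq_or_lt_of_le hN with hN1 | hN2
  · -- N = 1 : P is empty
    have hP : P = ∅ := by
      by_contra h
      obtain ⟨p, hp⟩ := nonempty_iff_ne_empty.2 h
      have h1 := Measure.one_le_hausdorffMeasure_zero_of_nonempty ⟨p, hp⟩
      rw [show (0:ℝ) = (N:ℝ) - 1 by rw [← hN1]; norm_num, hPnull] at h1
      simp at h1
    rw [hP, diff_empty]
    exact hΩconn
  · have hN2' : 2 ≤ N := hN2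
    have hcast : ((N - 1 : ℕ) : ℝ) = (N:ℝ) - 1 := by
      push_cast [Nat.cast_sub hN]; ring
    have hPnull' : μH[((N - 1 : ℕ) : ℝ)] P = 0 := by rw [hcast]; exact hPnull
    have hPvol : volume P = 0 := by
      apply helper_vol_null hN P
      have h2 := Measure.hausdorffMeasure_mono (show (N:ℝ) - 1 ≤ (N:ℝ) by linarith) P
      exact le_antisymm (hPnull ▸ h2) (zero_le)
    have hopen : IsOpen (Ω \ P) := by
      have : Ω \ P = Ω ∩ Cᶜ := by
        rw [hPC]
        ext q
        simp only [mem_diff, mem_inter_iff, mem_compl_iff]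
        tauto
      rw [this]
      exact hΩopen.inter hCclosed.isOpen_compl
  -- nonempty
    obtain ⟨x₀, hx₀⟩ : (Ω \ P).Nonempty := by
      by_contra h
      rw [not_nonempty_iff_eq_empty, diff_eq_empty] at h
      have h1 : volume Ω = 0 := measure_mono_null h hPvol
      exact absurd h1 (hΩopen.measure_pos volume hΩconn.nonempty).ne'
    -- the local path lemma
    have hlocal := helper_ball_joined hN2' C Ω P hCclosed hPC hPnull'
    -- balls minus P are nonempty
    have hball_ne : ∀ (y : EuclideanSpace ℝ (Fin N)) (r : ℝ), 0 < r →
        (ball y r \ P).Nonempty := by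
      intro y r hr
      by_contra h
      rw [not_nonempty_iff_eq_empty, diff_eq_empty] at h
      exact absurd (measure_mono_null h hPvol) (measure_ball_pos volume y hr).ne'
    -- the set S
    set S := {y : EuclideanSpace ℝ (Fin N) | y ∈ Ω ∧ ∃ r : ℝ, 0 < r ∧ closedBall y r ⊆ Ω ∧
      ∀ z ∈ ball y r \ P, JoinedIn (Ω \ P) x₀ z} with hS
    have hsubΩP : ∀ (y : EuclideanSpace ℝ (Fin N)) (r : ℝ), closedBall y r ⊆ Ω →
        ball y r \ P ⊆ Ω \ P :=
      fun y r h => diff_subset_diff_left ((ball_subset_closedBall).trans h)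
    -- x₀ ∈ S
    have hx₀S : x₀ ∈ S := by
      obtain ⟨ε, hε, hballsub⟩ := Metric.isOpen_iff.1 hΩopen x₀ hx₀.1
      refine ⟨hx₀.1, ε/2, by positivity, ?_, ?_⟩
      · exact (closedBall_subset_ball (by linarith)).trans hballsub
      · intro z hz
        refine (hlocal x₀ (ε/2) (by positivity)
          ((closedBall_subset_ball (by linarith)).trans hballsub)
          x₀ ⟨mem_ball_self (by positivity), hx₀.2⟩ z hz).mono ?_
        exact hsubΩP x₀ (ε/2) ((closedBall_subset_ball (by linarith)).trans hballsub)
    -- S is open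
    have hSopen : IsOpen S := by
      rw [Metric.isOpen_iff]
      rintro y ⟨hyΩ, r, hr, hcb, hjoin⟩
      refine ⟨r/2, by positivity, ?_⟩
      intro y' hy'
      have hy'y : dist y' y < r/2 := mem_ball.1 hy'
      refine ⟨hcb (mem_closedBall.2 (by linarith [dist_nonneg (x := y') (y := y)])), r/2,
        by positivity, ?_, ?_⟩
      · refine (closedBall_subset_closedBall' ?_).trans hcb
        linarith
      · intro z hz
        refine hjoin z ⟨?_, hz.2⟩
        have := mem_ball.1 hz.1
        exact mem_ball.2 (by
          calc dist z y ≤ dist z y' + dist y' y := dist_triangle _ _ _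
            _ < r := by linarith)
    -- Ω ∩ closure S ⊆ S
    have hScl : Ω ∩ closure S ⊆ S := by
      rintro y ⟨hyΩ, hyc⟩
      obtain ⟨ε, hε, hballsub⟩ := Metric.isOpen_iff.1 hΩopen y hyΩ
      set r := ε/4 with hrdef
      have hr : 0 < r := by positivity
      have h2r : closedBall y (2*r) ⊆ Ω := by
        refine (closedBall_subset_ball ?_).trans hballsub
        rw [hrdef]; linarith
      obtain ⟨y', hy'S, hy'd⟩ := Metric.mem_closure_iff.1 hyc r hr
      obtain ⟨hy'Ω, r'', hr'', hcb'', hjoin''⟩ := hy'S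
      set ρ := min r'' r with hρdef
      have hρ : 0 < ρ := lt_min hr'' hr
      obtain ⟨z₀, hz₀⟩ := hball_ne y' ρ hρ
      have hz₀join : JoinedIn (Ω \ P) x₀ z₀ :=
        hjoin'' z₀ ⟨ball_subset_ball (min_le_left _ _) hz₀.1, hz₀.2⟩
      refine ⟨hyΩ, 2*r, by linarith, h2r, ?_⟩
      intro z hz
      have hz₀ball : z₀ ∈ ball y (2*r) \ P := by
        refine ⟨mem_ball.2 ?_, hz₀.2⟩
        have h1 : dist z₀ y' < ρ := mem_ball.1 hz₀.1
        have h2 : ρ ≤ r := min_le_right _ _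
        calc dist z₀ y ≤ dist z₀ y' + dist y' y := dist_triangle _ _ _
          _ < ρ + r := by
              have h3 : dist y' y < r := by rw [dist_comm]; exact hy'd
              linarith
          _ ≤ 2*r := by linarith
      have hjz : JoinedIn (ball y (2*r) \ P) z₀ z :=
        hlocal y (2*r) (by linarith) h2r z₀ hz₀ball z hz
      exact hz₀join.trans (hjz.mono (hsubΩP y (2*r) h2r))
    -- S = Ω via connectedness
    have hΩS : Ω ⊆ S := by
      have hcover : Ω ⊆ S ∪ (closure S)ᶜ := by
        intro y hy
        by_cases h : y ∈ closure S
        · exact Or.inl (hScl ⟨hy, h⟩)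
        · exact Or.inr h
      have hdisj : Disjoint S (closure S)ᶜ :=
        disjoint_compl_right.mono_left subset_closure
      rcases hΩconn.isPreconnected.subset_or_subset hSopen (isClosed_closure).isOpen_compl
          hdisj hcover with h | h
      · exact h
      · exact absurd (subset_closure hx₀S) (h hx₀.1)
    -- conclude path connectedness
    have hpath : IsPathConnected (Ω \ P) := by
      refine ⟨x₀, hx₀, fun {y} hy => ?_⟩
      obtain ⟨-, r, hr, hcb, hjoin⟩ := hΩS hy.1
      exact hjoin y ⟨mem_ball_self hr, hy.2⟩
    exact hpath.isConnected
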